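/- Let G be a simple graph and θ a second-order stationary point of the Kuramoto energy on G. If a vertex u has exactly one neighbor w (u is a pendant vertex), then v_u = v_w, where v_k = (cos θ_k, sin θ_k). -/

import Mathlib

open Real Classical

noncomputable section

/-- Real-valued adjacency indicator of a simple graph. -/
def adjW {V : Type*} (G : SimpleGraph V) (i j : V) : ℝ := if G.Adj i j then 1 else 0

/-- The phasor (unit vector in the plane) associated with an angle. -/
def phasor (t : ℝ) : ℝ × ℝ := (Real.cos t, Real.sin t)

/-- The Kuramoto energy. -/
def kEnergy {V : Type*} [Fintype V] (G : SimpleGraph V) (θ : V → ℝ) : ℝ :=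
  (1 / 2) * ∑ i, ∑ j, adjW G i j * (1 - Real.cos (θ i - θ j))

/-- The Hessian of the Kuramoto energy. -/
def kHess {V : Type*} [Fintype V] (G : SimpleGraph V) (θ : V → ℝ) : Matrix V V ℝ :=
  fun i j =>
    if i = j then ∑ k, adjW G i k * Real.cos (θ i - θ k)
    else -(adjW G i j * Real.cos (θ i - θ j))

/-- First-order (equilibrium) condition of the homogeneous Kuramoto model. -/
def IsEquilibrium {V : Type*} [Fintype V] (G : SimpleGraph V) (θ : V → ℝ) : Prop :=
  ∀ i, ∑ j, adjW G i j * Real.sin (θ j - θ i) = 0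

/-- Second-order stationary point of the Kuramoto energy. -/
def IsSOSP {V : Type*} [Fintype V] (G : SimpleGraph V) (θ : V → ℝ) : Prop :=
  IsEquilibrium G θ ∧ (kHess G θ).PosSemidef

theorem pendant_vertex_sync_at_sosp
    {n : ℕ} (G : SimpleGraph (Fin n)) (θ : Fin n → ℝ)
    (u w : Fin n) (hpendant : G.neighborSet u = {w})
    (hsosp : IsSOSP G θ) :
    phasor (θ u) = phasor (θ w) := by
  have hadj : ∀ j, G.Adj u j ↔ j = w := fun j => by
    rw [← SimpleGraph.mem_neighborSet, hpendant, Set.mem_singleton_iff]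
  have haw : G.Adj u w := (hadj w).mpr rfl
  -- first-order condition gives sin (θ w - θ u) = 0
  have hsum := hsosp.1 u
  have hsin : Real.sin (θ w - θ u) = 0 := by
    have hs : ∑ j, adjW G u j * Real.sin (θ j - θ u)
        = Real.sin (θ w - θ u) := by
      rw [Finset.sum_eq_single w]
      · simp [adjW, haw]
      · intro j _ hj
        have hna : ¬ G.Adj u j := fun h => hj ((hadj j).mp h)
        simp [adjW, hna]
      · simp
    rw [hs] at hsum
    exact hsum
  -- Hessian diagonal entry nonneg gives cos (θ u - θ w) ≥ 0
  have hdiag : kHess G θ u u = Real.cos (θ u - θ w) := by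
    simp only [kHess, if_pos rfl]
    rw [Finset.sum_eq_single w]
    · simp [adjW, haw]
    · intro j _ hj
      have hna : ¬ G.Adj u j := fun h => hj ((hadj j).mp h)
      simp [adjW, hna]
    · simp
  have hnn : 0 ≤ kHess G θ u u := by
    have := hsosp.2.dotProduct_mulVec_nonneg (Pi.single u 1)
    simpa [dotProduct, Matrix.mulVec, Pi.single_apply, Finset.mul_sum] using this
  rw [hdiag] at hnn
  have hcos1 : Real.cos (θ u - θ w) = 1 := by
    have hs : Real.sin (θ u - θ w) = 0 := by
      have : θ u - θ w = -(θ w - θ u) := by ring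
      rw [this, Real.sin_neg, hsin, neg_zero]
    have hsq := Real.sin_sq_add_cos_sq (θ u - θ w)
    rw [hs] at hsq
    nlinarith [hnn]
  have hsin0 : Real.sin (θ u - θ w) = 0 := by
    have : θ u - θ w = -(θ w - θ u) := by ring
    rw [this, Real.sin_neg, hsin, neg_zero]
  have hc : Real.cos (θ u) = Real.cos (θ w) := by
    have := Real.cos_sub (θ u) (θ w)
    have h2 : Real.cos (θ u) = Real.cos ((θ u - θ w) + θ w) := by ring_nf
    rw [h2, Real.cos_add, hcos1, hsin0]; ring
  have hsv : Real.sin (θ u) = Real.sin (θ w) := by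
    have h2 : Real.sin (θ u) = Real.sin ((θ u - θ w) + θ w) := by ring_nf
    rw [h2, Real.sin_add, hcos1, hsin0]; ring
  simp [phasor, hc, hsv]
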